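/- For a sample of size n in ℝ^d with empirical measure μ, and k ∈ {1,…,n}, the level set S_{k/n} = {x : D(x) ≥ k/n} equals the intersection of all closed balls B containing at least n − k + 1 sample points, where D(x) is the ball-based depth 1 − sup{μ(B) : B closed ball, x ∉ B}. -/

import Mathlib

theorem sample_level_set_eq_iInter_balls (d n k : ℕ) (hn : 0 < n) (hk1 : 1 ≤ k) (hkn : k ≤ n)
    (x : Fin n → EuclideanSpace ℝ (Fin d)) :
    {p : EuclideanSpace ℝ (Fin d) |
        (k : ℝ) / n ≤ 1 - sSup {r : ℝ | ∃ (c : EuclideanSpace ℝ (Fin d)) (rad : ℝ),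
          0 ≤ rad ∧ p ∉ Metric.closedBall c rad ∧
          r = ({i : Fin n | x i ∈ Metric.closedBall c rad}.ncard : ℝ) / n}} =
      ⋂ (c : EuclideanSpace ℝ (Fin d)), ⋂ (rad : ℝ), ⋂ (_ : 0 ≤ rad),
        ⋂ (_ : n - k + 1 ≤ {i : Fin n | x i ∈ Metric.closedBall c rad}.ncard),
          Metric.closedBall c rad := by
  have hn' : (0:ℝ) < n := by exact_mod_cast hn
  have hcount : ∀ c (rad : ℝ),
      ({i : Fin n | x i ∈ Metric.closedBall c rad}.ncard : ℝ) ≤ n := by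
    intro c rad
    have : {i : Fin n | x i ∈ Metric.closedBall c rad}.ncard ≤ n := by
      have h1 := Set.ncard_le_ncard (Set.subset_univ
        {i : Fin n | x i ∈ Metric.closedBall c rad}) Set.finite_univ
      simpa [Set.ncard_univ] using h1
    exact_mod_cast this
  ext p
  set T : Set ℝ := {r : ℝ | ∃ (c : EuclideanSpace ℝ (Fin d)) (rad : ℝ),
      0 ≤ rad ∧ p ∉ Metric.closedBall c rad ∧
      r = ({i : Fin n | x i ∈ Metric.closedBall c rad}.ncard : ℝ) / n} with hT
  have hbdd : BddAbove T := by
    refine ⟨1, fun r hr => ?_⟩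
    obtain ⟨c, rad, _, _, rfl⟩ := hr
    rw [div_le_one hn']
    exact hcount c rad
  simp only [Set.mem_setOf_eq, Set.mem_iInter]
  constructor
  · intro hp c rad hrad hc
    by_contra hpc
    have hmem : ({i : Fin n | x i ∈ Metric.closedBall c rad}.ncard : ℝ) / n ∈ T :=
      ⟨c, rad, hrad, hpc, rfl⟩
    have hle := le_csSup hbdd hmem
    have hcR : ((n - k + 1 : ℕ) : ℝ) ≤ ({i : Fin n | x i ∈ Metric.closedBall c rad}.ncard : ℝ) := by
      exact_mod_cast hc
    have hcR' : ((n : ℝ) - k + 1) ≤ ({i : Fin n | x i ∈ Metric.closedBall c rad}.ncard : ℝ) := by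
      rwa [Nat.cast_add, Nat.cast_sub hkn, Nat.cast_one] at hcR
    have h1 : ((n : ℝ) - k + 1) / n ≤ sSup T :=
      le_trans (div_le_div_of_nonneg_right hcR' hn'.le |>.trans_eq rfl) hle
    have h2 : (k : ℝ) / n ≤ 1 - sSup T := hp
    have : (k : ℝ) / n + ((n : ℝ) - k + 1) / n ≤ 1 := by linarith
    rw [← add_div, div_le_one hn'] at this
    linarith
  · intro hp
    have hsup : sSup T ≤ ((n : ℝ) - k) / n := by
      apply Real.sSup_le
      · rintro r ⟨c, rad, hrad, hpc, rfl⟩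
        apply div_le_div_of_nonneg_right _ hn'.le
        have hlt : ¬ (n - k + 1 ≤ {i : Fin n | x i ∈ Metric.closedBall c rad}.ncard) := by
          intro h
          exact hpc (hp c rad hrad h)
        push_neg at hlt
        have : {i : Fin n | x i ∈ Metric.closedBall c rad}.ncard ≤ n - k := by omega
        have : ({i : Fin n | x i ∈ Metric.closedBall c rad}.ncard : ℝ) ≤ ((n - k : ℕ) : ℝ) := by
          exact_mod_cast this
        rwa [Nat.cast_sub hkn] at this
      · apply div_nonneg _ hn'.le
        have : (k : ℝ) ≤ n := by exact_mod_cast hkn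
        linarith
    have hk' : (k : ℝ) / n + ((n:ℝ) - k) / n = 1 := by
      rw [← add_div]
      field_simp
      ring
    linarith
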